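/- Let I ⊂ ℂ[∂₁,…,∂ₙ] be an ideal, ρ(I) ⊂ ℂ[∂₀,∂₁,…,∂ₙ] its homogenization, and w ∈ ℝ_{≥0}ⁿ generic so that in_w(I) and in_{(0,w)}(ρ(I)) are both monomial ideals. If in_{(0,w)}(ρ(I)) = ∩ᵢ Qᵢ is a primary decomposition into monomial primary ideals, then in_w(I) = ∩_{i : ∂₀ ∉ √Qᵢ} ⟨f(1,∂₁,…,∂ₙ) : f ∈ Qᵢ⟩ is a primary decomposition of in_w(I). -/

import Mathlib

open MvPolynomial
open scoped Classical

/-- The `w`-weight of a monomial exponent. -/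
noncomputable def wdeg {n : ℕ} (w : Fin n → ℝ) (m : Fin n →₀ ℕ) : ℝ := ∑ i, w i * m i

/-- The initial form of a polynomial with respect to `w`: the subsum of terms of
maximal `w`-weight. -/
noncomputable def inForm {n : ℕ} (w : Fin n → ℝ) (f : MvPolynomial (Fin n) ℂ) :
    MvPolynomial (Fin n) ℂ :=
  ∑ m ∈ f.support.filter (fun m => ∀ m' ∈ f.support, wdeg w m' ≤ wdeg w m),
    monomial m (coeff m f)

/-- The initial ideal `in_w(I)`, generated by the initial forms of the nonzero
elements of `I`. -/
noncomputable def inIdeal {n : ℕ} (w : Fin n → ℝ) (I : Ideal (MvPolynomial (Fin n) ℂ)) :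
    Ideal (MvPolynomial (Fin n) ℂ) :=
  Ideal.span {g | ∃ f ∈ I, f ≠ 0 ∧ g = inForm w f}

/-- The homogenization `ρ(f) = Σ c_u ∂₀^{deg f - |u|} ∂^u` of `f = Σ c_u ∂^u`. -/
noncomputable def homog {n : ℕ} (f : MvPolynomial (Fin n) ℂ) :
    MvPolynomial (Fin (n + 1)) ℂ :=
  ∑ m ∈ f.support,
    monomial (Finsupp.equivFunOnFinite.symm
      (Fin.cons (f.totalDegree - m.sum fun _ e => e) (fun i => m i))) (coeff m f)

/-- The homogenized ideal `ρ(I)`, generated by the `ρ(f)` for `f ∈ I`. -/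
noncomputable def homogIdeal {n : ℕ} (I : Ideal (MvPolynomial (Fin n) ℂ)) :
    Ideal (MvPolynomial (Fin (n + 1)) ℂ) :=
  Ideal.span {g | ∃ f ∈ I, g = homog f}

/-- A monomial ideal is one generated by monomials. -/
def IsMonomialIdeal {σ : Type*} (J : Ideal (MvPolynomial σ ℂ)) : Prop :=
  ∃ S : Set (σ →₀ ℕ),
    J = Ideal.span ((fun m => (monomial m 1 : MvPolynomial σ ℂ)) '' S)

/-- The dehomogenization map `f(∂₀,∂₁,…,∂ₙ) ↦ f(1,∂₁,…,∂ₙ)`. -/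
noncomputable def deh (n : ℕ) : MvPolynomial (Fin (n + 1)) ℂ →ₐ[ℂ] MvPolynomial (Fin n) ℂ :=
  aeval (Fin.cases (1 : MvPolynomial (Fin n) ℂ) X)

lemma deh_monomial {n : ℕ} (v : Fin (n+1) →₀ ℕ) (c : ℂ) :
    deh n (monomial v c) = monomial (Finsupp.tail v) c := by
  rw [deh, aeval_monomial, monomial_eq, Finsupp.prod_fintype _ _ (fun i => pow_zero _),
    Finsupp.prod_fintype _ _ (fun i => pow_zero _), Fin.prod_univ_succ]
  simp [Finsupp.tail_apply, algebraMap_eq]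

lemma wdeg_tail {n : ℕ} (w : Fin n → ℝ) (v : Fin (n+1) →₀ ℕ) :
    wdeg (Fin.cons 0 w) v = wdeg w (Finsupp.tail v) := by
  rw [wdeg, wdeg, Fin.sum_univ_succ]
  simp [Finsupp.tail_apply]

lemma coeff_sum_monomial {n : ℕ} {A : Type*} (s : Finset A) (φ : A → (Fin n →₀ ℕ))
    (c : A → ℂ) (x : Fin n →₀ ℕ) :
    coeff x (∑ m ∈ s, monomial (φ m) (c m)) =
      ∑ m ∈ s.filter (fun m => φ m = x), c m := by
  rw [Finset.sum_filter, coeff_sum]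
  exact Finset.sum_congr rfl fun m _ => by rw [coeff_monomial]

lemma coeff_sum_monomial_inj {n : ℕ} {A : Type*} (s : Finset A) (φ : A → (Fin n →₀ ℕ))
    (hinj : Set.InjOn φ s) (c : A → ℂ) {m₀ : A} (hm₀ : m₀ ∈ s) :
    coeff (φ m₀) (∑ m ∈ s, monomial (φ m) (c m)) = c m₀ := by
  rw [coeff_sum_monomial]
  rw [Finset.sum_eq_single_of_mem m₀ (by simp [hm₀])]
  intro b hb hne
  simp only [Finset.mem_filter] at hb
  exact absurd (hinj hb.1 hm₀ hb.2) hne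

lemma coeff_sum_monomial_notin {n : ℕ} {A : Type*} (s : Finset A) (φ : A → (Fin n →₀ ℕ))
    (c : A → ℂ) {x : Fin n →₀ ℕ} (hx : ∀ m ∈ s, φ m ≠ x) :
    coeff x (∑ m ∈ s, monomial (φ m) (c m)) = 0 := by
  rw [coeff_sum_monomial, Finset.filter_false_of_mem hx, Finset.sum_empty]

noncomputable def elift {n : ℕ} (f : MvPolynomial (Fin n) ℂ) (m : Fin n →₀ ℕ) :
    Fin (n+1) →₀ ℕ :=
  Finsupp.cons (f.totalDegree - m.sum fun _ e => e) m

lemma homog_eq {n : ℕ} (f : MvPolynomial (Fin n) ℂ) :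
    homog f = ∑ m ∈ f.support, monomial (elift f m) (coeff m f) := rfl

lemma tail_elift {n : ℕ} (f : MvPolynomial (Fin n) ℂ) (m : Fin n →₀ ℕ) :
    Finsupp.tail (elift f m) = m := Finsupp.tail_cons _ _

lemma elift_injOn {n : ℕ} (f : MvPolynomial (Fin n) ℂ) :
    Set.InjOn (elift f) f.support := by
  intro a _ b _ h
  rw [← tail_elift f a, h, tail_elift]

lemma support_sum_monomial {n : ℕ} {A : Type*} (s : Finset A) (φ : A → (Fin n →₀ ℕ))
    (hinj : Set.InjOn φ s) (c : A → ℂ) (hc : ∀ m ∈ s, c m ≠ 0) :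
    (∑ m ∈ s, monomial (φ m) (c m)).support = s.image φ := by
  ext x
  simp only [mem_support_iff, Finset.mem_image]
  constructor
  · intro hx
    by_contra hcon
    push_neg at hcon
    exact hx (coeff_sum_monomial_notin s φ c fun m hm => hcon m hm)
  · rintro ⟨m₀, hm₀, rfl⟩
    rw [coeff_sum_monomial_inj s φ hinj c hm₀]
    exact hc m₀ hm₀

lemma support_homog {n : ℕ} (f : MvPolynomial (Fin n) ℂ) :
    (homog f).support = f.support.image (elift f) := by
  rw [homog_eq]
  exact support_sum_monomial _ _ (elift_injOn f) _ (fun m hm => mem_support_iff.mp hm)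

lemma coeff_homog {n : ℕ} (f : MvPolynomial (Fin n) ℂ) {m : Fin n →₀ ℕ} (hm : m ∈ f.support) :
    coeff (elift f m) (homog f) = coeff m f := by
  rw [homog_eq]; exact coeff_sum_monomial_inj _ _ (elift_injOn f) _ hm

lemma homog_ne_zero {n : ℕ} {f : MvPolynomial (Fin n) ℂ} (hf : f ≠ 0) : homog f ≠ 0 := by
  intro h
  apply hf
  rw [← support_eq_empty] at h ⊢
  rw [support_homog, Finset.image_eq_empty] at h
  exact h

lemma deh_homog {n : ℕ} (f : MvPolynomial (Fin n) ℂ) : deh n (homog f) = f := by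
  rw [homog_eq, map_sum]
  rw [Finset.sum_congr rfl fun m _ => by rw [deh_monomial, tail_elift]]
  exact support_sum_monomial_coeff f

lemma wdeg_elift {n : ℕ} (w : Fin n → ℝ) (f : MvPolynomial (Fin n) ℂ) (m : Fin n →₀ ℕ) :
    wdeg (Fin.cons 0 w) (elift f m) = wdeg w m := by
  rw [wdeg_tail, tail_elift]

lemma inForm_homog {n : ℕ} (w : Fin n → ℝ) (f : MvPolynomial (Fin n) ℂ) :
    inForm (Fin.cons 0 w) (homog f) =
      ∑ m ∈ f.support.filter (fun m => ∀ m' ∈ f.support, wdeg w m' ≤ wdeg w m),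
        monomial (elift f m) (coeff m f) := by
  rw [inForm, support_homog]
  rw [show ((f.support.image (elift f)).filter
      (fun v => ∀ v' ∈ f.support.image (elift f), wdeg (Fin.cons 0 w) v' ≤ wdeg (Fin.cons 0 w) v))
      = (f.support.filter (fun m => ∀ m' ∈ f.support, wdeg w m' ≤ wdeg w m)).image (elift f) from ?_]
  · rw [Finset.sum_image (fun a ha b hb h =>
      (elift_injOn f) (Finset.mem_of_mem_filter a ha) (Finset.mem_of_mem_filter b hb) h)]
    refine Finset.sum_congr rfl fun m hm => ?_
    rw [coeff_homog f (Finset.mem_of_mem_filter m hm)]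
  · ext v
    simp only [Finset.mem_filter, Finset.mem_image]
    constructor
    · rintro ⟨⟨m, hm, rfl⟩, h2⟩
      refine ⟨m, ⟨hm, fun m' hm' => ?_⟩, rfl⟩
      have := h2 (elift f m') ⟨m', hm', rfl⟩
      rwa [wdeg_elift, wdeg_elift] at this
    · rintro ⟨m, ⟨hm, h⟩, rfl⟩
      refine ⟨⟨m, hm, rfl⟩, fun v' hv' => ?_⟩
      rcases hv' with ⟨m', hm', rfl⟩
      rw [wdeg_elift, wdeg_elift]
      exact h m' hm'

lemma deh_inForm_homog {n : ℕ} (w : Fin n → ℝ) (f : MvPolynomial (Fin n) ℂ) :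
    deh n (inForm (Fin.cons 0 w) (homog f)) = inForm w f := by
  rw [inForm_homog, map_sum, inForm]
  exact Finset.sum_congr rfl fun m _ => by rw [deh_monomial, tail_elift]

lemma coeff_sum_monomial_id {n : ℕ} (s : Finset (Fin n →₀ ℕ)) (c : (Fin n →₀ ℕ) → ℂ)
    (x : Fin n →₀ ℕ) :
    coeff x (∑ u ∈ s, monomial u (c u)) = if x ∈ s then c x else 0 := by
  rw [coeff_sum_monomial, Finset.filter_eq', apply_ite (Finset.sum · c), Finset.sum_singleton,
    Finset.sum_empty]

lemma deh_apply {n : ℕ} (p : MvPolynomial (Fin (n+1)) ℂ) :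
    deh n p = ∑ v ∈ p.support, monomial (Finsupp.tail v) (coeff v p) := by
  conv_lhs => rw [← support_sum_monomial_coeff p]
  rw [map_sum]
  exact Finset.sum_congr rfl fun v _ => deh_monomial v _

lemma deh_inForm {n : ℕ} (w : Fin n → ℝ) (h : MvPolynomial (Fin (n+1)) ℂ)
    (hne : deh n (inForm (Fin.cons 0 w) h) ≠ 0) :
    deh n (inForm (Fin.cons 0 w) h) = inForm w (deh n h) := by
  set w0 : Fin (n+1) → ℝ := Fin.cons 0 w with hw0
  set F := h.support.filter (fun v => ∀ v' ∈ h.support, wdeg w0 v' ≤ wdeg w0 v) with hF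
  have hg0 : deh n (inForm w0 h) = ∑ v ∈ F, monomial (Finsupp.tail v) (coeff v h) := by
    rw [inForm, map_sum]
    exact Finset.sum_congr rfl fun v _ => deh_monomial v _
  have hFne : F.Nonempty := by
    rcases Finset.eq_empty_or_nonempty F with hc | hc
    · exact absurd (by rw [hg0, hc, Finset.sum_empty]) hne
    · exact hc
  obtain ⟨v₀, hv₀⟩ := hFne
  rw [hF, Finset.mem_filter] at hv₀
  set W := wdeg w0 v₀ with hW
  have hFW : ∀ v ∈ F, wdeg w0 v = W := by
    intro v hv
    rw [hF, Finset.mem_filter] at hv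
    exact le_antisymm (hv₀.2 v hv.1) (hv.2 v₀ hv₀.1)
  have hWF : ∀ v ∈ h.support, wdeg w0 v = W → v ∈ F := by
    intro v hv hvW
    rw [hF, Finset.mem_filter]
    exact ⟨hv, fun v' hv' => hvW ▸ hv₀.2 v' hv'⟩
  -- coefficient formulas
  have cg0 : ∀ u, coeff u (deh n (inForm w0 h)) =
      ∑ v ∈ F.filter (fun v => Finsupp.tail v = u), coeff v h := by
    intro u; rw [hg0, coeff_sum_monomial]
  have cdh : ∀ u, coeff u (deh n h) =
      ∑ v ∈ h.support.filter (fun v => Finsupp.tail v = u), coeff v h := by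
    intro u; rw [deh_apply, coeff_sum_monomial]
  have keyi : ∀ u, wdeg w u = W → coeff u (deh n (inForm w0 h)) = coeff u (deh n h) := by
    intro u hu
    rw [cg0, cdh]
    congr 1
    ext v
    simp only [Finset.mem_filter, hF]
    constructor
    · rintro ⟨⟨hv, _⟩, ht⟩; exact ⟨hv, ht⟩
    · rintro ⟨hv, ht⟩
      have : wdeg w0 v = W := by rw [wdeg_tail, ht, hu]
      have := hWF v hv this
      rw [hF, Finset.mem_filter] at this
      exact ⟨this, ht⟩
  have keyii : ∀ u, wdeg w u ≠ W → coeff u (deh n (inForm w0 h)) = 0 := by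
    intro u hu
    rw [cg0, Finset.filter_false_of_mem, Finset.sum_empty]
    intro v hv ht
    exact hu (by rw [← ht, ← wdeg_tail, hFW v hv])
  have keyiii : ∀ u ∈ (deh n h).support, wdeg w u ≤ W := by
    intro u hu
    rw [mem_support_iff, cdh] at hu
    obtain ⟨v, hv⟩ := Finset.nonempty_of_sum_ne_zero hu
    rw [Finset.mem_filter] at hv
    rw [← hv.2, ← wdeg_tail]
    exact hv₀.2 v hv.1
  -- u₀ : top-weight support element of deh h
  obtain ⟨u₀, hu₀⟩ : ∃ u, coeff u (deh n (inForm w0 h)) ≠ 0 := by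
    by_contra hc
    push_neg at hc
    exact hne (ext _ _ fun u => by rw [hc u, coeff_zero])
  have hu₀W : wdeg w u₀ = W := by
    by_contra hc
    exact hu₀ (keyii u₀ hc)
  have hu₀supp : u₀ ∈ (deh n h).support := by
    rw [mem_support_iff, ← keyi u₀ hu₀W]
    exact hu₀
  -- the filter defining inForm w (deh h)
  have hG : (deh n h).support.filter
      (fun u => ∀ u' ∈ (deh n h).support, wdeg w u' ≤ wdeg w u)
      = (deh n h).support.filter (fun u => wdeg w u = W) := by
    ext u
    simp only [Finset.mem_filter]
    constructor
    · rintro ⟨hu, hall⟩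
      exact ⟨hu, le_antisymm (keyiii u hu) (hu₀W ▸ hall u₀ hu₀supp)⟩
    · rintro ⟨hu, huW⟩
      exact ⟨hu, fun u' hu' => huW ▸ keyiii u' hu'⟩
  conv_rhs => rw [inForm, hG]
  ext x
  rw [coeff_sum_monomial_id]
  by_cases hx : wdeg w x = W
  · rw [keyi x hx]
    by_cases hxs : x ∈ (deh n h).support
    · rw [if_pos (Finset.mem_filter.mpr ⟨hxs, hx⟩)]
    · rw [if_neg (fun hc => hxs (Finset.mem_of_mem_filter x hc)),
        notMem_support_iff.mp hxs]
  · rw [keyii x hx]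
    symm
    rw [if_neg]
    intro hc
    exact hx (Finset.mem_filter.mp hc).2

lemma inForm_zero {n : ℕ} (w : Fin n → ℝ) : inForm w (0 : MvPolynomial (Fin n) ℂ) = 0 := by
  rw [inForm]
  simp

lemma deh_homogIdeal_le {n : ℕ} (I : Ideal (MvPolynomial (Fin n) ℂ)) :
    Ideal.map (deh n) (homogIdeal I) ≤ I := by
  rw [Ideal.map_le_iff_le_comap, homogIdeal, Ideal.span_le]
  rintro g ⟨f, hf, rfl⟩
  simpa [Ideal.mem_comap, deh_homog] using hf

lemma inIdeal_eq_map {n : ℕ} (w : Fin n → ℝ) (I : Ideal (MvPolynomial (Fin n) ℂ)) :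
    inIdeal w I = Ideal.map (deh n) (inIdeal (Fin.cons 0 w) (homogIdeal I)) := by
  apply le_antisymm
  · rw [inIdeal, Ideal.span_le]
    rintro g ⟨f, hf, hf0, rfl⟩
    rw [← deh_inForm_homog w f]
    apply Ideal.mem_map_of_mem
    apply Ideal.subset_span
    exact ⟨homog f, Ideal.subset_span ⟨f, hf, rfl⟩, homog_ne_zero hf0, rfl⟩
  · rw [Ideal.map_le_iff_le_comap, inIdeal, Ideal.span_le]
    rintro g ⟨h, hh, hh0, rfl⟩
    simp only [SetLike.mem_coe, Ideal.mem_comap]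
    by_cases hz : deh n (inForm (Fin.cons 0 w) h) = 0
    · rw [hz]; exact zero_mem _
    · rw [deh_inForm w h hz]
      have hdehI : deh n h ∈ I := deh_homogIdeal_le I (Ideal.mem_map_of_mem _ hh)
      have hdne : deh n h ≠ 0 := by
        intro hc
        rw [deh_inForm w h hz, hc, inForm_zero] at hz
        exact hz rfl
      exact Ideal.subset_span ⟨deh n h, hdehI, hdne, rfl⟩

lemma monomial_one_mem_iff {k : ℕ} (S : Set (Fin k →₀ ℕ)) (v : Fin k →₀ ℕ) :
    (monomial v 1 : MvPolynomial (Fin k) ℂ) ∈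
      Ideal.span ((fun m => (monomial m 1 : MvPolynomial (Fin k) ℂ)) '' S) ↔
      ∃ s ∈ S, s ≤ v := by
  rw [mem_ideal_span_monomial_image]
  constructor
  · intro hh
    exact hh v (by rw [support_monomial, if_neg one_ne_zero]; exact Finset.mem_singleton_self v)
  · intro hh x hx
    rw [support_monomial, if_neg one_ne_zero, Finset.mem_singleton] at hx
    exact hx ▸ hh

lemma cons_le_cons {k : ℕ} {a b : Fin k →₀ ℕ} {y y' : ℕ} (hy : y ≤ y') (hab : a ≤ b) :
    Finsupp.cons y a ≤ Finsupp.cons y' b := by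
  rw [Finsupp.le_def]
  intro i
  refine Fin.cases ?_ ?_ i
  · simpa using hy
  · intro j
    simpa using hab j

lemma tail_le_tail {k : ℕ} {a b : Fin (k+1) →₀ ℕ} (hab : a ≤ b) :
    Finsupp.tail a ≤ Finsupp.tail b := by
  rw [Finsupp.le_def]
  intro i
  exact hab i.succ

lemma single_zero_add_cons {k : ℕ} (v : Fin (k+1) →₀ ℕ) :
    Finsupp.cons 0 (Finsupp.tail v) + Finsupp.single 0 (v 0) = v := by
  ext i
  refine Fin.cases ?_ ?_ i
  · simp
  · intro j
    simp only [Finsupp.add_apply, Finsupp.cons_succ, Finsupp.tail_apply,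
      Finsupp.single_apply, if_neg (fun h : (0: Fin (k+1)) = j.succ => (Fin.succ_ne_zero j) h.symm),
      add_zero]

lemma mapDomain_succ_eq_cons {k : ℕ} (u : Fin k →₀ ℕ) :
    Finsupp.mapDomain Fin.succ u = Finsupp.cons 0 u := by
  ext i
  refine Fin.cases ?_ ?_ i
  · rw [Finsupp.mapDomain_notin_range]
    · simp
    · rintro ⟨j, hj⟩
      exact Fin.succ_ne_zero j hj
  · intro j
    rw [Finsupp.mapDomain_apply (Fin.succ_injective k)]
    simp

lemma dezero_mem {k : ℕ} (Qi : Ideal (MvPolynomial (Fin (k+1)) ℂ)) (S : Set (Fin (k+1) →₀ ℕ))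
    (hS : Qi = Ideal.span ((fun m => (monomial m 1 : MvPolynomial (Fin (k+1)) ℂ)) '' S))
    (hprim : Qi.IsPrimary) (hX0 : (X 0 : MvPolynomial (Fin (k+1)) ℂ) ∉ Qi.radical)
    {v : Fin (k+1) →₀ ℕ} (hv : (monomial v 1 : MvPolynomial (Fin (k+1)) ℂ) ∈ Qi) :
    (monomial (Finsupp.cons 0 (Finsupp.tail v)) 1 : MvPolynomial (Fin (k+1)) ℂ) ∈ Qi := by
  have hmul : (monomial (Finsupp.cons 0 (Finsupp.tail v)) 1 : MvPolynomial (Fin (k+1)) ℂ) *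
      X 0 ^ (v 0) = monomial v 1 := by
    rw [X_pow_eq_monomial, monomial_mul, one_mul, single_zero_add_cons]
  rcases (Ideal.isPrimary_iff.mp hprim).2 (hmul ▸ hv) with hmem | hrad
  · exact hmem
  · exfalso
    apply hX0
    rcases Ideal.mem_radical_iff.mp hrad with ⟨c, hc⟩
    exact Ideal.mem_radical_iff.mpr ⟨v 0 * c, by rwa [pow_mul]⟩

lemma map_deh_span {k : ℕ} (S : Set (Fin (k+1) →₀ ℕ)) :
    Ideal.map (deh k) (Ideal.span ((fun m => (monomial m 1 : MvPolynomial (Fin (k+1)) ℂ)) '' S))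
      = Ideal.span ((fun m => (monomial m 1 : MvPolynomial (Fin k) ℂ)) '' (Finsupp.tail '' S)) := by
  rw [Ideal.map_span, Set.image_image, Set.image_image]
  congr 1
  ext g
  constructor
  · rintro ⟨s, hs, rfl⟩
    exact ⟨s, hs, (deh_monomial s 1).symm⟩
  · rintro ⟨s, hs, rfl⟩
    exact ⟨s, hs, deh_monomial s 1⟩

lemma mem_map_deh_iff {k : ℕ} (S : Set (Fin (k+1) →₀ ℕ)) (f : MvPolynomial (Fin k) ℂ) :
    f ∈ Ideal.map (deh k)
        (Ideal.span ((fun m => (monomial m 1 : MvPolynomial (Fin (k+1)) ℂ)) '' S)) ↔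
      ∀ u ∈ f.support, ∃ s ∈ S, Finsupp.tail s ≤ u := by
  rw [map_deh_span, mem_ideal_span_monomial_image]
  constructor
  · intro hh u hu
    rcases hh u hu with ⟨si, ⟨s, hs, rfl⟩, hle⟩
    exact ⟨s, hs, hle⟩
  · intro hh u hu
    rcases hh u hu with ⟨s, hs, hle⟩
    exact ⟨Finsupp.tail s, ⟨s, hs, rfl⟩, hle⟩

lemma map_deh_eq_comap {k : ℕ} (Qi : Ideal (MvPolynomial (Fin (k+1)) ℂ))
    (S : Set (Fin (k+1) →₀ ℕ))
    (hS : Qi = Ideal.span ((fun m => (monomial m 1 : MvPolynomial (Fin (k+1)) ℂ)) '' S))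
    (hprim : Qi.IsPrimary) (hX0 : (X 0 : MvPolynomial (Fin (k+1)) ℂ) ∉ Qi.radical) :
    Ideal.map (deh k) Qi = Ideal.comap (rename Fin.succ : MvPolynomial (Fin k) ℂ →ₐ[ℂ]
      MvPolynomial (Fin (k+1)) ℂ) Qi := by
  ext f
  rw [hS, mem_map_deh_iff, Ideal.mem_comap]
  have hsup : (rename Fin.succ f).support = f.support.image (Finsupp.mapDomain Fin.succ) :=
    support_rename_of_injective (Fin.succ_injective k)
  rw [mem_ideal_span_monomial_image, hsup]
  constructor
  · intro hh x hx
    rcases Finset.mem_image.mp hx with ⟨u, hu, rfl⟩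
    rcases hh u hu with ⟨s, hs, hle⟩
    have h1 : (monomial s 1 : MvPolynomial (Fin (k+1)) ℂ) ∈ Qi := by
      rw [hS]; exact (monomial_one_mem_iff S s).mpr ⟨s, hs, le_refl s⟩
    have h2 := dezero_mem Qi S hS hprim hX0 h1
    rw [hS] at h2
    rcases (monomial_one_mem_iff S _).mp h2 with ⟨s', hs', hle'⟩
    refine ⟨s', hs', le_trans hle' ?_⟩
    rw [mapDomain_succ_eq_cons]
    exact cons_le_cons (le_refl 0) hle
  · intro hh u hu
    rcases hh (Finsupp.mapDomain Fin.succ u) (Finset.mem_image_of_mem _ hu) with ⟨s, hs, hle⟩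
    refine ⟨s, hs, ?_⟩
    have := tail_le_tail hle
    rwa [mapDomain_succ_eq_cons, Finsupp.tail_cons] at this

lemma comap_primary {k : ℕ} (Qi : Ideal (MvPolynomial (Fin (k+1)) ℂ)) (hprim : Qi.IsPrimary) :
    (Ideal.comap (rename Fin.succ : MvPolynomial (Fin k) ℂ →ₐ[ℂ]
      MvPolynomial (Fin (k+1)) ℂ) Qi).IsPrimary := by
  rw [Ideal.isPrimary_iff]
  constructor
  · intro hc
    apply (Ideal.isPrimary_iff.mp hprim).1
    rw [Ideal.eq_top_iff_one]
    have : (1 : MvPolynomial (Fin k) ℂ) ∈ Ideal.comap (rename Fin.succ : MvPolynomial (Fin k) ℂ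
      →ₐ[ℂ] MvPolynomial (Fin (k+1)) ℂ) Qi := hc ▸ Submodule.mem_top
    simpa [Ideal.mem_comap] using this
  · intro x y hxy
    rw [Ideal.mem_comap, map_mul] at hxy
    rcases (Ideal.isPrimary_iff.mp hprim).2 hxy with hmem | hrad
    · exact Or.inl hmem
    · right
      rw [← Ideal.comap_radical]
      exact hrad

lemma cons_sub_add {k : ℕ} (u : Fin k →₀ ℕ) {c N : ℕ} (hc : c ≤ N) :
    Finsupp.cons (N - c) u + Finsupp.single 0 c = Finsupp.cons N u := by
  ext i
  refine Fin.cases ?_ ?_ i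
  · simp [Nat.sub_add_cancel hc]
  · intro j
    simp only [Finsupp.add_apply, Finsupp.cons_succ, Finsupp.single_apply,
      if_neg (fun h : (0 : Fin (k+1)) = j.succ => (Fin.succ_ne_zero j) h.symm), add_zero]

/-- Dehomogenizing a primary decomposition of `in_{(0,w)}(ρ(I))` and discarding the
components whose radical contains `∂₀` yields a primary decomposition of `in_w(I)`. -/
theorem stmt4 (n : ℕ) (w : Fin n → ℝ) (hw : ∀ i, 0 ≤ w i)
    (I : Ideal (MvPolynomial (Fin n) ℂ)) (m : ℕ)
    (Q : Fin m → Ideal (MvPolynomial (Fin (n + 1)) ℂ))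
    (hmonI : IsMonomialIdeal (inIdeal w I))
    (hmonH : IsMonomialIdeal (inIdeal (Fin.cons 0 w) (homogIdeal I)))
    (hQmon : ∀ i, IsMonomialIdeal (Q i))
    (hQprim : ∀ i, (Q i).IsPrimary)
    (hdec : inIdeal (Fin.cons 0 w) (homogIdeal I) = ⨅ i, Q i) :
    inIdeal w I = (⨅ i, ⨅ (_ : (X 0 : MvPolynomial (Fin (n + 1)) ℂ) ∉ (Q i).radical),
        Ideal.map (deh n) (Q i)) ∧
    ∀ i, (X 0 : MvPolynomial (Fin (n + 1)) ℂ) ∉ (Q i).radical →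
      (Ideal.map (deh n) (Q i)).IsPrimary := by
  have hJ : inIdeal w I = Ideal.map (deh n) (⨅ i, Q i) := by
    rw [inIdeal_eq_map, hdec]
  choose S hS using hQmon
  constructor
  · apply le_antisymm
    · rw [hJ]
      exact le_iInf fun i => le_iInf fun hi => Ideal.map_mono (iInf_le _ i)
    · intro f hf
      obtain ⟨S₀, hS₀⟩ := hmonI
      rw [hS₀, mem_ideal_span_monomial_image]
      intro u hu
      -- bound for the saturation exponent
      set ν : Fin m → ℕ := fun i =>
        if h : (X 0 : MvPolynomial (Fin (n + 1)) ℂ) ∈ (Q i).radical then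
          Classical.choose (Ideal.mem_radical_iff.mp h) else 0 with hν
      set N : ℕ := Finset.univ.sup ν with hN
      have hkey : (monomial (Finsupp.cons N u) 1 : MvPolynomial (Fin (n+1)) ℂ) ∈ ⨅ i, Q i := by
        rw [Submodule.mem_iInf (fun i => Q i)]
        intro i
        by_cases hi : (X 0 : MvPolynomial (Fin (n + 1)) ℂ) ∈ (Q i).radical
        · -- saturated component: use a power of X 0 in Q i
          have hpow : (X 0 : MvPolynomial (Fin (n + 1)) ℂ) ^ (ν i) ∈ Q i := by
            rw [hν]
            simp only [dif_pos hi]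
            exact Classical.choose_spec (Ideal.mem_radical_iff.mp hi)
          have hle : ν i ≤ N := Finset.le_sup (Finset.mem_univ i)
          have : (monomial (Finsupp.cons (N - ν i) u) 1 : MvPolynomial (Fin (n+1)) ℂ) *
              (X 0) ^ (ν i) ∈ Q i := Ideal.mul_mem_left _ _ hpow
          rwa [X_pow_eq_monomial, monomial_mul, one_mul, cons_sub_add u hle] at this
        · -- component surviving dehomogenization
          have hfi : f ∈ Ideal.map (deh n) (Q i) := by
            have h3 := (Submodule.mem_iInf _).mp hf i
            exact (Submodule.mem_iInf _).mp h3 hi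
          rw [hS i, mem_map_deh_iff] at hfi
          rcases hfi u hu with ⟨s, hsS, hle⟩
          have h1 : (monomial s 1 : MvPolynomial (Fin (n+1)) ℂ) ∈ Q i := by
            rw [hS i]; exact (monomial_one_mem_iff _ s).mpr ⟨s, hsS, le_refl s⟩
          have h2 := dezero_mem (Q i) (S i) (hS i) (hQprim i) hi h1
          rw [hS i] at h2 ⊢
          rcases (monomial_one_mem_iff _ _).mp h2 with ⟨s', hs', hle'⟩
          exact (monomial_one_mem_iff _ _).mpr
            ⟨s', hs', le_trans hle' (cons_le_cons (Nat.zero_le N) hle)⟩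
      have : (monomial u 1 : MvPolynomial (Fin n) ℂ) ∈ inIdeal w I := by
        rw [hJ]
        have := Ideal.mem_map_of_mem (deh n) hkey
        rwa [deh_monomial, Finsupp.tail_cons] at this
      rw [hS₀, monomial_one_mem_iff] at this
      exact this
  · intro i hi
    rw [map_deh_eq_comap (Q i) (S i) (hS i) (hQprim i) hi]
    exact comap_primary (Q i) (hQprim i)
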